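/- For an R-bimodule M, the two constructions (Frobenius extension → Frobenius coring, via Δ(s) = s·e and θ = ε ∘ m; Frobenius coring → Frobenius extension, via m(c ⊗ d) = c₍₁₎θ(c₍₂₎ ⊗ d) and e = Δ(1)) are mutually inverse: Frobenius extension structures on M correspond bijectively to Frobenius R-coring structures on M. -/
import Mathlib


/-!
STATEMENT 5. For an `R`-bimodule `M` (with `R` commutative acting centrally),
Frobenius extension structures on `M` correspond bijectively to Frobenius
`R`-coring structures on `M`, via `Δ(s) = s·e`, `θ = ε ∘ m` in one direction and
`m(c ⊗ d) = c₍₁₎θ(c₍₂₎ ⊗ d)`, `e = Δ(1)` in the other.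
-/

open TensorProduct

section Defs

variable (R : Type*) [CommRing R] (M : Type*) [AddCommGroup M] [Module R M]

/-- `x ⊗ y ↦ ε(x) • y`. -/
noncomputable def ctrL (ε : M →ₗ[R] R) : M ⊗[R] M →ₗ[R] M :=
  (TensorProduct.lid R M).toLinearMap ∘ₗ LinearMap.rTensor M ε

/-- `x ⊗ y ↦ ε(y) • x`. -/
noncomputable def ctrR (ε : M →ₗ[R] R) : M ⊗[R] M →ₗ[R] M :=
  (TensorProduct.rid R M).toLinearMap ∘ₗ LinearMap.lTensor M ε

/-- `x ⊗ y ↦ θ(y ⊗ d) • x`; composing with `Δ` gives `c ↦ c₍₁₎θ(c₍₂₎ ⊗ d)`. -/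
noncomputable def corL (θ : M ⊗[R] M →ₗ[R] R) (d : M) : M ⊗[R] M →ₗ[R] M :=
  (TensorProduct.rid R M).toLinearMap ∘ₗ
    LinearMap.lTensor M (θ ∘ₗ (TensorProduct.mk R M M).flip d)

variable {R M}

/-- A Frobenius extension structure on the `R`-module `M`: an associative
unital `R`-bilinear multiplication together with a Frobenius system `(e, ε)`. -/
structure FrobExtStructure (R M : Type*) [CommRing R] [AddCommGroup M]
    [Module R M] where
  mul : M →ₗ[R] M →ₗ[R] M
  one : M
  mul_assoc' : ∀ a b c : M, mul (mul a b) c = mul a (mul b c)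
  one_mul' : ∀ a : M, mul one a = a
  mul_one' : ∀ a : M, mul a one = a
  e : M ⊗[R] M
  ε : M →ₗ[R] R
  /-- `e ∈ (M ⊗_R M)^M` : `s·e¹ ⊗ e² = e¹ ⊗ e²·s`. -/
  invariant : ∀ s : M,
    LinearMap.rTensor M (mul s) e = LinearMap.lTensor M (mul.flip s) e
  counit_left : ctrL R M ε e = one
  counit_right : ctrR R M ε e = one

/-- A Frobenius `R`-coring structure on the `R`-module `M`. -/
structure FrobCoringStructure (R M : Type*) [CommRing R] [AddCommGroup M]
    [Module R M] where
  Δ : M →ₗ[R] M ⊗[R] M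
  ε : M →ₗ[R] R
  θ : M ⊗[R] M →ₗ[R] R
  one : M
  coassoc : ∀ c : M, TensorProduct.assoc R M M M (LinearMap.rTensor M Δ (Δ c))
      = LinearMap.lTensor M Δ (Δ c)
  counit_left : ∀ c : M, ctrL R M ε (Δ c) = c
  counit_right : ∀ c : M, ctrR R M ε (Δ c) = c
  /-- `c₍₁₎θ(c₍₂₎ ⊗ d) = θ(c ⊗ d₍₁₎)d₍₂₎`, the right-hand side re-expressed via
  the left-hand formula applied in the other variable. -/
  frob : ∀ c d : M, corL R M θ d (Δ c)
      = (TensorProduct.lid R M) (LinearMap.rTensor M (θ ∘ₗ TensorProduct.mk R M M c) (Δ d))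
  θ_one_left : ∀ c : M, θ (c ⊗ₜ[R] one) = ε c
  θ_one_right : ∀ c : M, θ (one ⊗ₜ[R] c) = ε c

end Defs

namespace FrobProof

open TensorProduct LinearMap

variable {R M : Type*} [CommRing R] [AddCommGroup M] [Module R M]

@[simp] lemma ctrL_tmul (ε : M →ₗ[R] R) (x y : M) :
    ctrL R M ε (x ⊗ₜ[R] y) = ε x • y := by
  simp [ctrL]

@[simp] lemma ctrR_tmul (ε : M →ₗ[R] R) (x y : M) :
    ctrR R M ε (x ⊗ₜ[R] y) = ε y • x := by
  simp [ctrR]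

@[simp] lemma corL_tmul (θ : M ⊗[R] M →ₗ[R] R) (d x y : M) :
    corL R M θ d (x ⊗ₜ[R] y) = θ (y ⊗ₜ[R] d) • x := by
  simp [corL]

lemma ctrL_apply_eq (g : M →ₗ[R] R) (z : M ⊗[R] M) :
    (TensorProduct.lid R M) (g.rTensor M z) = ctrL R M g z := rfl

lemma ctrL_lTensor (ε : M →ₗ[R] R) (f : M →ₗ[R] M) (z : M ⊗[R] M) :
    ctrL R M ε (f.lTensor M z) = f (ctrL R M ε z) := by
  induction z using TensorProduct.induction_on with
  | zero => simp
  | tmul x y => simp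
  | add a b ha hb => simp [ha, hb]

lemma ctrL_rTensor (g : M →ₗ[R] R) (f : M →ₗ[R] M) (z : M ⊗[R] M) :
    ctrL R M g (f.rTensor M z) = ctrL R M (g ∘ₗ f) z := by
  induction z using TensorProduct.induction_on with
  | zero => simp
  | tmul x y => simp
  | add a b ha hb => simp [ha, hb]

lemma ctrR_rTensor (ε : M →ₗ[R] R) (f : M →ₗ[R] M) (z : M ⊗[R] M) :
    ctrR R M ε (f.rTensor M z) = f (ctrR R M ε z) := by
  induction z using TensorProduct.induction_on with
  | zero => simp
  | tmul x y => simp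
  | add a b ha hb => simp [ha, hb]

lemma corL_rTensor (θ : M ⊗[R] M →ₗ[R] R) (d : M) (f : M →ₗ[R] M) (z : M ⊗[R] M) :
    corL R M θ d (f.rTensor M z) = f (corL R M θ d z) := by
  induction z using TensorProduct.induction_on with
  | zero => simp
  | tmul x y => simp
  | add a b ha hb => simp [ha, hb]

lemma corL_add_right (θ : M ⊗[R] M →ₗ[R] R) (d d' : M) (z : M ⊗[R] M) :
    corL R M θ (d + d') z = corL R M θ d z + corL R M θ d' z := by
  induction z using TensorProduct.induction_on with
  | zero => simp
  | tmul x y => simp [tmul_add, add_smul]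
  | add a b ha hb => simp only [map_add, ha, hb]; abel

lemma corL_smul_right (θ : M ⊗[R] M →ₗ[R] R) (r : R) (d : M) (z : M ⊗[R] M) :
    corL R M θ (r • d) z = r • corL R M θ d z := by
  induction z using TensorProduct.induction_on with
  | zero => simp
  | tmul x y => simp [tmul_smul, smul_smul]
  | add a b ha hb => simp only [map_add, ha, hb, smul_add]

end FrobProof
namespace FrobProof

variable {R M : Type*} [CommRing R] [AddCommGroup M] [Module R M]

section Ext

variable (X : FrobExtStructure R M)

lemma mul_comp (a b : M) : X.mul (X.mul a b) = X.mul a ∘ₗ X.mul b :=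
  LinearMap.ext fun c => X.mul_assoc' a b c

lemma mul_one_eq_id : X.mul X.one = LinearMap.id := LinearMap.ext X.one_mul'

/-- `Δ(s) = s·e`. -/
noncomputable def extΔ : M →ₗ[R] M ⊗[R] M where
  toFun s := (X.mul s).rTensor M X.e
  map_add' s t := by
    simp only [map_add, LinearMap.rTensor_add, LinearMap.add_apply]
  map_smul' r s := by
    simp only [map_smul, LinearMap.rTensor_smul, LinearMap.smul_apply, RingHom.id_apply]

lemma extΔ_apply (s : M) : extΔ X s = (X.mul s).rTensor M X.e := rfl

lemma extΔ_mul (c a : M) : extΔ X (X.mul c a) = (X.mul c).rTensor M (extΔ X a) := by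
  rw [extΔ_apply, extΔ_apply, mul_comp, LinearMap.rTensor_comp, LinearMap.comp_apply]

/-- The multiplication `θ = ε ∘ m` of the associated coring. -/
noncomputable def extθ : M ⊗[R] M →ₗ[R] R := X.ε ∘ₗ TensorProduct.lift X.mul

@[simp] lemma extθ_tmul (c d : M) : extθ X (c ⊗ₜ[R] d) = X.ε (X.mul c d) := by
  simp [extθ]

lemma corL_extθ (d : M) (z : M ⊗[R] M) :
    corL R M (extθ X) d z = ctrR R M X.ε ((X.mul.flip d).lTensor M z) := by
  induction z using TensorProduct.induction_on with
  | zero => simp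
  | tmul x y => simp
  | add a b ha hb => simp [ha, hb]

lemma corL_extθ_e (d : M) : corL R M (extθ X) d X.e = d := by
  rw [corL_extθ, ← X.invariant d, ctrR_rTensor, X.counit_right, X.mul_one']

lemma corL_extθ_extΔ (c d : M) : corL R M (extθ X) d (extΔ X c) = X.mul c d := by
  rw [extΔ_apply, corL_rTensor, corL_extθ_e]

end Ext

end FrobProof
namespace FrobProof

open TensorProduct LinearMap

variable {R M : Type*} [CommRing R] [AddCommGroup M] [Module R M]

/-- `(a⊗b)⊗(u⊗v) ↦ μ(a⊗u) ⊗ (v⊗b)`. -/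
noncomputable def Fm (μ : M ⊗[R] M →ₗ[R] M) :
    (M ⊗[R] M) ⊗[R] (M ⊗[R] M) →ₗ[R] M ⊗[R] (M ⊗[R] M) :=
  ((TensorProduct.comm R M M).toLinearMap.lTensor M) ∘ₗ
    (μ.rTensor (M ⊗[R] M)) ∘ₗ (tensorTensorTensorComm R M M M M).toLinearMap

@[simp] lemma Fm_tmul (μ : M ⊗[R] M →ₗ[R] M) (a b u v : M) :
    Fm μ ((a ⊗ₜ[R] b) ⊗ₜ[R] (u ⊗ₜ[R] v)) = μ (a ⊗ₜ[R] u) ⊗ₜ[R] (v ⊗ₜ[R] b) := by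
  simp [Fm]

/-- `(a⊗b)⊗(u⊗v) ↦ a ⊗ (u ⊗ μ(v⊗b))`. -/
noncomputable def Gm (μ : M ⊗[R] M →ₗ[R] M) :
    (M ⊗[R] M) ⊗[R] (M ⊗[R] M) →ₗ[R] M ⊗[R] (M ⊗[R] M) :=
  (TensorProduct.assoc R M M M).toLinearMap ∘ₗ
    ((μ ∘ₗ (TensorProduct.comm R M M).toLinearMap).lTensor (M ⊗[R] M)) ∘ₗ
      (tensorTensorTensorComm R M M M M).toLinearMap

@[simp] lemma Gm_tmul (μ : M ⊗[R] M →ₗ[R] M) (a b u v : M) :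
    Gm μ ((a ⊗ₜ[R] b) ⊗ₜ[R] (u ⊗ₜ[R] v)) = a ⊗ₜ[R] (u ⊗ₜ[R] μ (v ⊗ₜ[R] b)) := by
  simp [Gm]

/-- `(a⊗b)⊗(u⊗v) ↦ u ⊗ (μ(v⊗a) ⊗ b)`. -/
noncomputable def Hm (μ : M ⊗[R] M →ₗ[R] M) :
    (M ⊗[R] M) ⊗[R] (M ⊗[R] M) →ₗ[R] M ⊗[R] (M ⊗[R] M) :=
  ((((μ ∘ₗ (TensorProduct.comm R M M).toLinearMap).rTensor M) ∘ₗ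
      (TensorProduct.assoc R M M M).symm.toLinearMap).lTensor M) ∘ₗ
    (TensorProduct.assoc R M M (M ⊗[R] M)).toLinearMap ∘ₗ
      (tensorTensorTensorComm R M M M M).toLinearMap ∘ₗ
        (TensorProduct.comm R (M ⊗[R] M) (M ⊗[R] M)).toLinearMap

@[simp] lemma Hm_tmul (μ : M ⊗[R] M →ₗ[R] M) (a b u v : M) :
    Hm μ ((a ⊗ₜ[R] b) ⊗ₜ[R] (u ⊗ₜ[R] v)) = u ⊗ₜ[R] (μ (v ⊗ₜ[R] a) ⊗ₜ[R] b) := by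
  simp [Hm]

section Ext2

variable (X : FrobExtStructure R M)

/-- abbreviation for the lifted multiplication -/
noncomputable def μX : M ⊗[R] M →ₗ[R] M := TensorProduct.lift X.mul

@[simp] lemma μX_tmul (a u : M) : μX X (a ⊗ₜ[R] u) = X.mul a u := rfl

lemma S1 (x y : M) (w : M ⊗[R] M) :
    (TensorProduct.assoc R M M M) (((X.mul x).rTensor M w) ⊗ₜ[R] y)
      = Fm (μX X) ((x ⊗ₜ[R] y) ⊗ₜ[R] w) := by
  induction w using TensorProduct.induction_on with
  | zero => simp
  | tmul u v => simp
  | add a b ha hb => simp only [map_add, add_tmul, tmul_add, ha, hb]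

lemma S2 (x y : M) (w : M ⊗[R] M) :
    Hm (μX X) ((x ⊗ₜ[R] y) ⊗ₜ[R] w)
      = (TensorProduct.assoc R M M M) (((X.mul.flip x).lTensor M w) ⊗ₜ[R] y) := by
  induction w using TensorProduct.induction_on with
  | zero => simp
  | tmul u v => simp
  | add a b ha hb => simp only [map_add, add_tmul, tmul_add, ha, hb]

lemma S3 (a b : M) (w : M ⊗[R] M) :
    Hm (μX X) (w ⊗ₜ[R] (a ⊗ₜ[R] b)) = a ⊗ₜ[R] ((X.mul b).rTensor M w) := by
  induction w using TensorProduct.induction_on with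
  | zero => simp
  | tmul u v => simp
  | add p q hp hq => simp only [map_add, add_tmul, tmul_add, hp, hq]

lemma S4 (a b : M) (w : M ⊗[R] M) :
    Gm (μX X) ((a ⊗ₜ[R] b) ⊗ₜ[R] w) = a ⊗ₜ[R] ((X.mul.flip b).lTensor M w) := by
  induction w using TensorProduct.induction_on with
  | zero => simp
  | tmul u v => simp
  | add p q hp hq => simp only [map_add, add_tmul, tmul_add, hp, hq]

lemma coassoc_core :
    (TensorProduct.assoc R M M M) ((extΔ X).rTensor M X.e) = (extΔ X).lTensor M X.e := by
  have L1 : ∀ z : M ⊗[R] M,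
      (TensorProduct.assoc R M M M) ((extΔ X).rTensor M z) = Fm (μX X) (z ⊗ₜ[R] X.e) := by
    intro z
    induction z using TensorProduct.induction_on with
    | zero => simp
    | tmul x y =>
      rw [LinearMap.rTensor_tmul, extΔ_apply, S1]
    | add a b ha hb => simp only [map_add, add_tmul, ha, hb]
  have L2 : ∀ z : M ⊗[R] M, Fm (μX X) (z ⊗ₜ[R] X.e) = Hm (μX X) (z ⊗ₜ[R] X.e) := by
    intro z
    induction z using TensorProduct.induction_on with
    | zero => simp [zero_tmul]
    | tmul x y => rw [← S1, X.invariant x, ← S2]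
    | add a b ha hb => simp only [add_tmul, map_add, ha, hb]
  have L3 : ∀ z : M ⊗[R] M, Hm (μX X) (X.e ⊗ₜ[R] z) = Gm (μX X) (z ⊗ₜ[R] X.e) := by
    intro z
    induction z using TensorProduct.induction_on with
    | zero => simp [zero_tmul, tmul_zero]
    | tmul a b => rw [S3, X.invariant b, ← S4]
    | add a b ha hb => simp only [add_tmul, tmul_add, map_add, ha, hb]
  have L4 : ∀ z : M ⊗[R] M, Gm (μX X) (z ⊗ₜ[R] X.e) = (extΔ X).lTensor M z := by
    intro z
    induction z using TensorProduct.induction_on with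
    | zero => simp [zero_tmul]
    | tmul x y => rw [S4, ← X.invariant y, LinearMap.lTensor_tmul, ← extΔ_apply]
    | add a b ha hb => simp only [add_tmul, map_add, ha, hb]
  rw [L1 X.e, L2 X.e, L3 X.e, L4 X.e]

lemma assoc_rTensor_rTensor (f : M →ₗ[R] M) (w : (M ⊗[R] M) ⊗[R] M) :
    TensorProduct.assoc R M M M (((f.rTensor M).rTensor M) w)
      = f.rTensor (M ⊗[R] M) (TensorProduct.assoc R M M M w) := by
  induction w using TensorProduct.induction_on with
  | zero => simp
  | tmul t y =>
    induction t using TensorProduct.induction_on with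
    | zero => simp [zero_tmul]
    | tmul p q => simp
    | add a b ha hb => simp only [add_tmul, map_add, ha, hb]
  | add a b ha hb => simp only [map_add, ha, hb]

lemma lTensor_rTensor_comm (f g : M →ₗ[R] M ⊗[R] M) (h : M →ₗ[R] M) (w : M ⊗[R] M) :
    f.lTensor M (h.rTensor M w) = h.rTensor (M ⊗[R] M) (f.lTensor M w) := by
  induction w using TensorProduct.induction_on with
  | zero => simp
  | tmul x y => simp
  | add a b ha hb => simp only [map_add, ha, hb]

lemma toCoring_coassoc (c : M) :
    TensorProduct.assoc R M M M ((extΔ X).rTensor M (extΔ X c))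
      = (extΔ X).lTensor M (extΔ X c) := by
  have hcomm : extΔ X ∘ₗ X.mul c = (X.mul c).rTensor M ∘ₗ extΔ X :=
    LinearMap.ext fun a => extΔ_mul X c a
  have h1 : (extΔ X).rTensor M (extΔ X c)
      = ((X.mul c).rTensor M).rTensor M ((extΔ X).rTensor M X.e) := by
    rw [extΔ_apply, ← LinearMap.comp_apply, ← LinearMap.rTensor_comp, hcomm,
      LinearMap.rTensor_comp, LinearMap.comp_apply]
  rw [h1, assoc_rTensor_rTensor, coassoc_core, extΔ_apply,
    lTensor_rTensor_comm (extΔ X) (extΔ X) (X.mul c) X.e]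

end Ext2

end FrobProof
namespace FrobProof

open TensorProduct LinearMap

variable {R M : Type*} [CommRing R] [AddCommGroup M] [Module R M]

/-- From a Frobenius extension structure to a Frobenius coring structure. -/
noncomputable def toCoring (X : FrobExtStructure R M) : FrobCoringStructure R M where
  Δ := extΔ X
  ε := X.ε
  θ := extθ X
  one := X.one
  coassoc := toCoring_coassoc X
  counit_left := fun c => by
    rw [extΔ_apply, X.invariant c, ctrL_lTensor, X.counit_left, LinearMap.flip_apply,
      X.one_mul']
  counit_right := fun c => by
    rw [extΔ_apply, ctrR_rTensor, X.counit_right, X.mul_one']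
  frob := fun c d => by
    rw [corL_extθ_extΔ, ctrL_apply_eq, extΔ_apply, ctrL_rTensor]
    have h : (extθ X ∘ₗ TensorProduct.mk R M M c) ∘ₗ X.mul d
        = X.ε ∘ₗ X.mul (X.mul c d) := by
      apply LinearMap.ext; intro x
      simp [X.mul_assoc']
    rw [h]
    have h2 : ctrL R M (X.ε ∘ₗ X.mul (X.mul c d)) X.e
        = ctrL R M X.ε ((X.mul (X.mul c d)).rTensor M X.e) := by
      rw [ctrL_rTensor]
    rw [h2, X.invariant, ctrL_lTensor, X.counit_left, LinearMap.flip_apply, X.one_mul']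
  θ_one_left := fun c => by simp [X.mul_one']
  θ_one_right := fun c => by simp [X.one_mul']

end FrobProof
namespace FrobProof

open TensorProduct LinearMap

variable {R M : Type*} [CommRing R] [AddCommGroup M] [Module R M]

section Coring

variable (Y : FrobCoringStructure R M)

/-- The multiplication `m(c ⊗ d) = c₍₁₎θ(c₍₂₎ ⊗ d)`. -/
noncomputable def corMul : M →ₗ[R] M →ₗ[R] M :=
  LinearMap.mk₂ R (fun c d => corL R M Y.θ d (Y.Δ c))
    (fun c c' d => by simp only [map_add, LinearMap.map_add])
    (fun r c d => by simp only [map_smul, LinearMap.map_smul])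
    (fun c d d' => corL_add_right Y.θ d d' (Y.Δ c))
    (fun r c d => corL_smul_right Y.θ r d (Y.Δ c))

@[simp] lemma corMul_apply (c d : M) : corMul Y c d = corL R M Y.θ d (Y.Δ c) := rfl

lemma corMul_eq_ctrL (c d : M) :
    corMul Y c d = ctrL R M (Y.θ ∘ₗ TensorProduct.mk R M M c) (Y.Δ d) := by
  rw [corMul_apply, Y.frob c d, ctrL_apply_eq]

lemma theta_assoc_aux (x c : M) (t : M ⊗[R] M) :
    Y.θ ((ctrL R M (Y.θ ∘ₗ TensorProduct.mk R M M x) t) ⊗ₜ[R] c)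
      = Y.θ (x ⊗ₜ[R] corL R M Y.θ c t) := by
  induction t using TensorProduct.induction_on with
  | zero => simp
  | tmul p q =>
    simp only [ctrL_tmul, corL_tmul, LinearMap.comp_apply, TensorProduct.mk_apply,
      ← smul_tmul', tmul_smul, map_smul, smul_eq_mul]
    ring
  | add a b ha hb => simp only [map_add, add_tmul, tmul_add, ha, hb]

lemma theta_assoc (x b c : M) :
    Y.θ ((corMul Y x b) ⊗ₜ[R] c) = Y.θ (x ⊗ₜ[R] corMul Y b c) := by
  rw [corMul_eq_ctrL, corMul_apply, theta_assoc_aux]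

lemma lTensor_corL_assoc (b y : M) (t : M ⊗[R] M) :
    (corL R M Y.θ b).lTensor M (TensorProduct.assoc R M M M (t ⊗ₜ[R] y))
      = Y.θ (y ⊗ₜ[R] b) • t := by
  induction t using TensorProduct.induction_on with
  | zero => simp [zero_tmul]
  | tmul p q => simp [tmul_smul]
  | add a b ha hb => simp only [add_tmul, map_add, ha, hb, smul_add]

lemma Δ_corL (b : M) (z : M ⊗[R] M) :
    Y.Δ (corL R M Y.θ b z)
      = (corL R M Y.θ b).lTensor M
          (TensorProduct.assoc R M M M ((Y.Δ).rTensor M z)) := by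
  induction z using TensorProduct.induction_on with
  | zero => simp
  | tmul x y =>
    rw [LinearMap.rTensor_tmul, lTensor_corL_assoc, corL_tmul, map_smul]
  | add a b ha hb => simp only [map_add, ha, hb]

lemma ΔcorMulL (a b : M) :
    Y.Δ (corMul Y a b) = ((corMul Y).flip b).lTensor M (Y.Δ a) := by
  have hc : corL R M Y.θ b ∘ₗ Y.Δ = (corMul Y).flip b := LinearMap.ext fun a' => rfl
  rw [corMul_apply, Δ_corL, Y.coassoc, ← LinearMap.comp_apply, ← LinearMap.lTensor_comp, hc]

/-- `p ⊗ t ↦ g(p) • t` on `M ⊗ (M ⊗ M)`. -/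
noncomputable def scalE (g : M →ₗ[R] R) :
    M ⊗[R] (M ⊗[R] M) →ₗ[R] M ⊗[R] M :=
  (TensorProduct.lid R (M ⊗[R] M)).toLinearMap ∘ₗ g.rTensor (M ⊗[R] M)

@[simp] lemma scalE_tmul (g : M →ₗ[R] R) (p : M) (t : M ⊗[R] M) :
    scalE g (p ⊗ₜ[R] t) = g p • t := by simp [scalE]

lemma Q1 (g : M →ₗ[R] R) (z : M ⊗[R] M) :
    Y.Δ (ctrL R M g z) = scalE g ((Y.Δ).lTensor M z) := by
  induction z using TensorProduct.induction_on with
  | zero => simp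
  | tmul p q => simp
  | add a b ha hb => simp only [map_add, ha, hb]

lemma Q3 (g : M →ₗ[R] R) (w : (M ⊗[R] M) ⊗[R] M) :
    scalE g (TensorProduct.assoc R M M M w) = (ctrL R M g).rTensor M w := by
  induction w using TensorProduct.induction_on with
  | zero => simp
  | tmul t y =>
    induction t using TensorProduct.induction_on with
    | zero => simp [zero_tmul]
    | tmul p q => simp [smul_tmul']
    | add a b ha hb => simp only [add_tmul, map_add, ha, hb]
  | add a b ha hb => simp only [map_add, ha, hb]

lemma ΔcorMulR (a b : M) :
    Y.Δ (corMul Y a b) = (corMul Y a).rTensor M (Y.Δ b) := by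
  have hc : ctrL R M (Y.θ ∘ₗ TensorProduct.mk R M M a) ∘ₗ Y.Δ = corMul Y a :=
    LinearMap.ext fun d => (corMul_eq_ctrL Y a d).symm
  rw [corMul_eq_ctrL, Q1, ← Y.coassoc b, Q3, ← LinearMap.comp_apply,
    ← LinearMap.rTensor_comp, hc]

lemma corMul_one_left (a : M) : corMul Y Y.one a = a := by
  have h : Y.θ ∘ₗ TensorProduct.mk R M M Y.one = Y.ε :=
    LinearMap.ext fun x => Y.θ_one_right x
  rw [corMul_eq_ctrL, h, Y.counit_left]

lemma corMul_one_right (a : M) : corMul Y a Y.one = a := by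
  have h : ∀ z : M ⊗[R] M, corL R M Y.θ Y.one z = ctrR R M Y.ε z := by
    intro z
    induction z using TensorProduct.induction_on with
    | zero => simp
    | tmul x y => rw [corL_tmul, ctrR_tmul, Y.θ_one_left]
    | add a b ha hb => simp only [map_add, ha, hb]
  rw [corMul_apply, h, Y.counit_right]

lemma corL_lTensor_flip (b c : M) (z : M ⊗[R] M) :
    corL R M Y.θ c (((corMul Y).flip b).lTensor M z)
      = corL R M Y.θ (corMul Y b c) z := by
  induction z using TensorProduct.induction_on with
  | zero => simp
  | tmul x y =>
    rw [LinearMap.lTensor_tmul, corL_tmul, corL_tmul, LinearMap.flip_apply,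
      theta_assoc]
  | add a b ha hb => simp only [map_add, ha, hb]

lemma corMul_assoc (a b c : M) :
    corMul Y (corMul Y a b) c = corMul Y a (corMul Y b c) := by
  rw [corMul_apply, ΔcorMulL, corL_lTensor_flip, ← corMul_apply]

/-- From a Frobenius coring structure to a Frobenius extension structure. -/
noncomputable def toExt : FrobExtStructure R M where
  mul := corMul Y
  one := Y.one
  mul_assoc' := corMul_assoc Y
  one_mul' := corMul_one_left Y
  mul_one' := corMul_one_right Y
  e := Y.Δ Y.one
  ε := Y.ε
  invariant := fun s => by
    rw [← ΔcorMulR Y s Y.one, ← ΔcorMulL Y Y.one s, corMul_one_right, corMul_one_left]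
  counit_left := Y.counit_left Y.one
  counit_right := Y.counit_right Y.one

end Coring

end FrobProof
namespace FrobProof

open TensorProduct LinearMap

variable {R M : Type*} [CommRing R] [AddCommGroup M] [Module R M]

lemma FrobExtStructure.ext_of {X X' : FrobExtStructure R M}
    (h1 : X.mul = X'.mul) (h2 : X.one = X'.one) (h3 : X.e = X'.e)
    (h4 : X.ε = X'.ε) : X = X' := by
  cases X; cases X'
  simp only at h1 h2 h3 h4
  subst h1; subst h2; subst h3; subst h4
  rfl

lemma FrobCoringStructure.ext_of {Y Y' : FrobCoringStructure R M}
    (h1 : Y.Δ = Y'.Δ) (h2 : Y.ε = Y'.ε) (h3 : Y.θ = Y'.θ)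
    (h4 : Y.one = Y'.one) : Y = Y' := by
  cases Y; cases Y'
  simp only at h1 h2 h3 h4
  subst h1; subst h2; subst h3; subst h4
  rfl

lemma left_inv (X : FrobExtStructure R M) : toExt (toCoring X) = X := by
  apply FrobExtStructure.ext_of
  · apply LinearMap.ext; intro c; apply LinearMap.ext; intro d
    show corMul (toCoring X) c d = X.mul c d
    rw [corMul_apply]
    exact corL_extθ_extΔ X c d
  · rfl
  · show extΔ X X.one = X.e
    rw [extΔ_apply, mul_one_eq_id, LinearMap.rTensor_id, LinearMap.id_apply]
  · rfl

lemma right_inv (Y : FrobCoringStructure R M) : toCoring (toExt Y) = Y := by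
  apply FrobCoringStructure.ext_of
  · apply LinearMap.ext; intro s
    show extΔ (toExt Y) s = Y.Δ s
    rw [extΔ_apply]
    show (corMul Y s).rTensor M (Y.Δ Y.one) = Y.Δ s
    rw [← ΔcorMulR Y s Y.one, corMul_one_right]
  · rfl
  · show extθ (toExt Y) = Y.θ
    apply TensorProduct.ext'
    intro c d
    rw [extθ_tmul]
    show Y.ε (corMul Y c d) = Y.θ (c ⊗ₜ[R] d)
    have h : ∀ z : M ⊗[R] M,
        Y.ε (corL R M Y.θ d z) = Y.θ ((ctrL R M Y.ε z) ⊗ₜ[R] d) := by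
      intro z
      induction z using TensorProduct.induction_on with
      | zero => simp
      | tmul x y =>
        simp only [corL_tmul, ctrL_tmul, map_smul, ← smul_tmul', smul_eq_mul]
        ring
      | add a b ha hb => simp only [map_add, add_tmul, ha, hb]
    rw [corMul_apply, h, Y.counit_left]
  · rfl

end FrobProof

/-- Frobenius extension structures on `M` correspond bijectively to Frobenius
`R`-coring structures on `M`; the bijection and its inverse are given by the
usual formulas `Δ(s) = s·e`, `θ = ε ∘ m`, respectively `e = Δ(1)`,
`m(c ⊗ d) = c₍₁₎θ(c₍₂₎ ⊗ d)` (and `ε`, `1` are preserved). -/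
theorem frobExt_equiv_frobCoring
    (R M : Type*) [CommRing R] [AddCommGroup M] [Module R M] :
    ∃ Φ : FrobExtStructure R M ≃ FrobCoringStructure R M,
      (∀ X : FrobExtStructure R M,
        (Φ X).ε = X.ε ∧ (Φ X).one = X.one ∧
        (∀ s : M, (Φ X).Δ s = LinearMap.rTensor M (X.mul s) X.e) ∧
        (Φ X).θ = X.ε ∘ₗ TensorProduct.lift X.mul) ∧
      (∀ Y : FrobCoringStructure R M,
        (Φ.symm Y).ε = Y.ε ∧ (Φ.symm Y).one = Y.one ∧
        (Φ.symm Y).e = Y.Δ Y.one ∧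
        (∀ c d : M, (Φ.symm Y).mul c d = corL R M Y.θ d (Y.Δ c))) := by
  refine ⟨⟨FrobProof.toCoring, FrobProof.toExt, FrobProof.left_inv, FrobProof.right_inv⟩,
    fun X => ⟨rfl, rfl, fun s => rfl, rfl⟩,
    fun Y => ⟨rfl, rfl, rfl, fun c d => rfl⟩⟩
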